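/- For every δ with |δ| < 1, the integral I_0(δ) := ∫₀¹ 1 / (1 − δ sin(2πv))^{3/2} dv satisfies I_0(δ) = (2/π) · 1/((1−δ)√(1+δ)) · E(2δ/(1+δ)), where E(m) = ∫₀^{π/2} √(1 − m sin²θ) dθ is the complete elliptic integral of the second kind. -/

import Mathlib

noncomputable section

open Real intervalIntegral

/-- Complete elliptic integral of the second kind. -/
def ellipticE (m : ℝ) : ℝ :=
  ∫ θ in (0:ℝ)..(π/2), Real.sqrt (1 - m * Real.sin θ ^ 2)

lemma Xpos {m : ℝ} (hm : m < 1) (θ : ℝ) : 0 < 1 - m * Real.sin θ ^ 2 := by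
  rcases le_or_gt m 0 with h | h
  · nlinarith [sq_nonneg (Real.sin θ)]
  · nlinarith [Real.sin_sq_le_one θ]

lemma contQ {m : ℝ} (hm : m < 1) :
    Continuous fun θ : ℝ => 1 / (1 - m * Real.sin θ ^ 2) ^ ((3:ℝ)/2) := by
  have hc : Continuous fun θ : ℝ => 1 - m * Real.sin θ ^ 2 := by fun_prop
  have h2 : Continuous fun θ : ℝ => (1 - m * Real.sin θ ^ 2) ^ ((3:ℝ)/2) :=
    hc.rpow_const fun x => Or.inr (by norm_num)
  exact continuous_const.div h2 fun x => ne_of_gt (Real.rpow_pos_of_pos (Xpos hm x) _)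

lemma rpow_th {x : ℝ} (hx : 0 < x) : x ^ ((3:ℝ)/2) = x * Real.sqrt x := by
  rw [Real.sqrt_eq_rpow, show ((3:ℝ)/2) = 1 + 1/2 by norm_num, Real.rpow_add hx, Real.rpow_one]

lemma ellipticE_eq {m : ℝ} (hm : m < 1) :
    ellipticE m = (1 - m) * ∫ θ in (0:ℝ)..(π/2), 1 / (1 - m * Real.sin θ ^ 2) ^ ((3:ℝ)/2) := by
  set f : ℝ → ℝ := fun θ => m * (Real.sin θ * Real.cos θ / Real.sqrt (1 - m * Real.sin θ ^ 2))
    with hfdef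
  have hX : ∀ θ : ℝ, (0:ℝ) < 1 - m * Real.sin θ ^ 2 := Xpos hm
  have hderiv : ∀ θ ∈ Set.uIcc (0:ℝ) (π/2), HasDerivAt f
      (Real.sqrt (1 - m * Real.sin θ ^ 2)
        - (1 - m) * (1 / (1 - m * Real.sin θ ^ 2) ^ ((3:ℝ)/2))) θ := by
    intro θ _
    have hXθ := hX θ
    have hXne : (1 - m * Real.sin θ ^ 2) ≠ 0 := ne_of_gt hXθ
    have hsq : Real.sqrt (1 - m * Real.sin θ ^ 2) ^ 2 = 1 - m * Real.sin θ ^ 2 :=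
      Real.sq_sqrt hXθ.le
    have hrpos : 0 < Real.sqrt (1 - m * Real.sin θ ^ 2) := Real.sqrt_pos.2 hXθ
    have hXd : HasDerivAt (fun t : ℝ => 1 - m * Real.sin t ^ 2)
        (-(m * (2 * Real.sin θ ^ 1 * Real.cos θ))) θ := by
      simpa using (((Real.hasDerivAt_sin θ).pow 2).const_mul m).const_sub 1
    have hrd := hXd.sqrt hXne
    have hud : HasDerivAt (fun t : ℝ => Real.sin t * Real.cos t)
        (Real.cos θ * Real.cos θ + Real.sin θ * -Real.sin θ) θ :=
      (Real.hasDerivAt_sin θ).mul (Real.hasDerivAt_cos θ)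
    have hdiv := (hud.div hrd (ne_of_gt hrpos)).const_mul m
    refine hdiv.congr_deriv ?_
    symm
    rw [rpow_th hXθ]
    have hpyth := Real.sin_sq_add_cos_sq θ
    generalize hgen : Real.sqrt (1 - m * Real.sin θ ^ 2) = r at hsq hrpos ⊢
    field_simp
    rw [← hsq]
    field_simp
    linear_combination (r^2 + (1 - m * Real.sin θ ^ 2) - m*(1-2*Real.sin θ ^ 2)) * hsq - (m*r^2 + m^2*Real.sin θ ^ 2) * hpyth
  have hcont1 : Continuous fun θ : ℝ => Real.sqrt (1 - m * Real.sin θ ^ 2) := by fun_prop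
  have hcont2 : Continuous fun θ : ℝ =>
      (1 - m) * (1 / (1 - m * Real.sin θ ^ 2) ^ ((3:ℝ)/2)) :=
    continuous_const.mul (contQ hm)
  have hFTC := intervalIntegral.integral_eq_sub_of_hasDerivAt hderiv
    ((hcont1.sub hcont2).intervalIntegrable 0 (π/2))
  have h0 : (∫ θ in (0:ℝ)..(π/2), (Real.sqrt (1 - m * Real.sin θ ^ 2)
      - (1 - m) * (1 / (1 - m * Real.sin θ ^ 2) ^ ((3:ℝ)/2)))) = 0 := by
    rw [hFTC]; simp [hfdef]
  rw [intervalIntegral.integral_sub (hcont1.intervalIntegrable 0 (π/2))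
      (hcont2.intervalIntegrable 0 (π/2)), sub_eq_zero] at h0
  rw [intervalIntegral.integral_const_mul] at h0
  exact h0

theorem I0_elliptic_formula (δ : ℝ) (hδ : |δ| < 1) :
    (∫ v in (0:ℝ)..1, 1 / (1 - δ * Real.sin (2 * π * v)) ^ ((3:ℝ)/2))
      = (2 / π) * (1 / ((1 - δ) * Real.sqrt (1 + δ)))
        * ellipticE (2 * δ / (1 + δ)) := by
  obtain ⟨hδ1, hδ2⟩ := abs_lt.mp hδ
  have h1δ : (0:ℝ) < 1 + δ := by linarith
  have h1δ' : (0:ℝ) < 1 - δ := by linarith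
  have hπ : (0:ℝ) < π := Real.pi_pos
  set m : ℝ := 2 * δ / (1 + δ) with hmdef
  have hm : m < 1 := by rw [hmdef, div_lt_one h1δ]; linarith
  set P : ℝ → ℝ := fun u => 1 / (1 - δ * Real.sin u) ^ ((3:ℝ)/2) with hPdef
  set Q : ℝ → ℝ := fun θ => 1 / (1 - m * Real.sin θ ^ 2) ^ ((3:ℝ)/2) with hQdef
  have hQcont : Continuous Q := contQ hm
  have hPper : Function.Periodic P (2 * π) := by
    intro u; simp only [hPdef, Real.sin_add_two_pi]
  -- Step 1: substitute u = 2πv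
  have s1 : (∫ v in (0:ℝ)..1, 1 / (1 - δ * Real.sin (2 * π * v)) ^ ((3:ℝ)/2))
      = (2 * π)⁻¹ * ∫ u in (0:ℝ)..(2 * π), P u := by
    have e : (fun v : ℝ => 1 / (1 - δ * Real.sin (2 * π * v)) ^ ((3:ℝ)/2))
        = fun v => P (2 * π * v) := rfl
    rw [e, intervalIntegral.integral_comp_mul_left (a := 0) (b := 1) P
      (c := 2 * π) (by positivity), mul_zero, mul_one, smul_eq_mul]
  -- Step 2: shift by -π/2 using periodicity
  have s2 : (∫ u in (0:ℝ)..(2 * π), P u)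
      = ∫ x in (0:ℝ)..(2 * π), P (x + -(π/2)) := by
    rw [intervalIntegral.integral_comp_add_right P (-(π/2))]
    have h := hPper.intervalIntegral_add_eq 0 (-(π/2))
    rw [zero_add] at h
    rw [h]
    norm_num
    ring_nf
  -- pointwise: P (x - π/2) = C * Q (x/2)
  set C : ℝ := 1 / (1 + δ) ^ ((3:ℝ)/2) with hCdef
  have hpt : ∀ x : ℝ, P (x + -(π/2)) = C * Q (x/2) := by
    intro x
    have hhalf : Real.cos x = 1 - 2 * Real.sin (x/2) ^ 2 := by
      have h1 := Real.cos_two_mul (x/2)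
      have h2 := Real.sin_sq_add_cos_sq (x/2)
      rw [show 2 * (x/2) = x by ring] at h1
      linarith
    have hkey : 1 - δ * Real.sin (x + -(π/2)) = (1 + δ) * (1 - m * Real.sin (x/2) ^ 2) := by
      rw [show x + -(π/2) = x - π/2 by ring, Real.sin_sub_pi_div_two, hhalf, hmdef]
      field_simp
      ring
    rw [hPdef]
    simp only []
    rw [hkey, Real.mul_rpow h1δ.le (Xpos hm (x/2)).le, hCdef, hQdef]
    rw [div_mul_div_comm, one_mul]
  -- Step 3/4: constant out and substitute θ = x/2
  have s3 : (∫ x in (0:ℝ)..(2 * π), P (x + -(π/2)))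
      = C * (2 * ∫ θ in (0:ℝ)..π, Q θ) := by
    rw [intervalIntegral.integral_congr (g := fun x => C * Q (x/2)) (fun x _ => hpt x)]
    rw [intervalIntegral.integral_const_mul]
    congr 1
    have h := intervalIntegral.integral_comp_div (a := 0) (b := 2 * π) Q
      (c := (2:ℝ)) two_ne_zero
    rw [h, smul_eq_mul]
    norm_num
  -- Step 5: fold [0, π] to [0, π/2]
  have s5 : (∫ θ in (0:ℝ)..π, Q θ) = 2 * ∫ θ in (0:ℝ)..(π/2), Q θ := by
    have hsplit := intervalIntegral.integral_add_adjacent_intervals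
      (hQcont.intervalIntegrable (μ := MeasureTheory.volume) 0 (π/2))
      (hQcont.intervalIntegrable (μ := MeasureTheory.volume) (π/2) π)
    have hrefl : (∫ θ in (π/2:ℝ)..π, Q θ) = ∫ θ in (0:ℝ)..(π/2), Q θ := by
      have h := intervalIntegral.integral_comp_sub_left (a := 0) (b := π/2) Q π
      rw [sub_zero, show π - π/2 = π/2 by ring] at h
      rw [← h]
      apply intervalIntegral.integral_congr
      intro x _
      simp [hQdef, Real.sin_pi_sub]
    linarith [hsplit, hrefl]
  -- Step 6: assemble
  have EE : ellipticE m = (1 - m) * ∫ θ in (0:ℝ)..(π/2), Q θ := ellipticE_eq hm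
  rw [s1, s2, s3, s5, EE]
  set J := ∫ θ in (0:ℝ)..(π/2), Q θ with hJ
  have hsqrt : (0:ℝ) < Real.sqrt (1 + δ) := Real.sqrt_pos.2 h1δ
  have hm' : (1:ℝ) - m = (1 - δ) / (1 + δ) := by
    rw [hmdef]; field_simp; ring
  rw [hCdef, rpow_th h1δ, hm']
  field_simp
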